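/- Let A be a commutative ring, let n ≥ 1, let a be a function assigning an element a_f ∈ A to each edge f of the complete graph K_{n+1}, and let e_0 be an edge of K_{n+1}. Then Φ_{n+1}(a + 1_{e_0}) − Φ_{n+1}(a) = Φ_n((c_{e_0})_* a), where 1_{e_0} is the function equal to 1 on e_0 and 0 on every other edge. -/

import Mathlib

/-- The product `T_*(a) = ∏_{f edge of T} a_f` associated to a (spanning sub)graph `T`
of the complete graph on `Fin n` and a function `a` on edges. -/
noncomputable def treeProd {n : ℕ} {A : Type*} [CommRing A]
    (T : SimpleGraph (Fin n)) (a : Sym2 (Fin n) → A) : A :=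
  ∏ᶠ f ∈ T.edgeSet, a f

/-- The `n`-th forested form `Φ_n(a) = Σ_{T spanning tree of K_n} T_*(a)`. -/
noncomputable def forestedForm (n : ℕ) {A : Type*} [CommRing A]
    (a : Sym2 (Fin n) → A) : A :=
  ∑ᶠ (T : SimpleGraph (Fin n)) (_ : T.IsTree), treeProd T a

/-- The pushforward `(c_{e₀})_* a`: the value on an edge `g` of `K_n` is the sum of `a_f`
over the edges `f ≠ e₀` of `K_{n+1}` contracting onto `g`. -/
noncomputable def pushforward {n : ℕ} {A : Type*} [CommRing A]
    (q : Fin (n + 1) → Fin n) (e₀ : Sym2 (Fin (n + 1)))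
    (a : Sym2 (Fin (n + 1)) → A) : Sym2 (Fin n) → A :=
  fun g => ∑ᶠ f ∈ {f : Sym2 (Fin (n + 1)) | ¬ f.IsDiag ∧ f ≠ e₀ ∧ Sym2.map q f = g}, a f

/-- The function `1_{e₀}`, equal to `1` on the edge `e₀` and `0` elsewhere. -/
def edgeIndicator {n : ℕ} {A : Type*} [CommRing A] (e₀ : Sym2 (Fin n)) :
    Sym2 (Fin n) → A :=
  fun f => if f = e₀ then 1 else 0


/-! ### Auxiliary material for the proof -/

open SimpleGraph Finset

section Counting

variable {V : Type*}

/-- Transfer reachability along deletion of one non-bridge edge. -/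
private lemma SpanAux.reach_del {G : SimpleGraph V} {v w : V}
    (h : (G \ fromEdgeSet {s(v, w)}).Reachable v w) :
    ∀ {x y : V}, G.Reachable x y → (G \ fromEdgeSet {s(v, w)}).Reachable x y := by
  intro x y ⟨p⟩
  induction p with
  | nil => exact Reachable.refl _
  | cons ha p ih =>
    rename_i x' z' y'
    by_cases he : s(x', z') = s(v, w)
    · rw [Sym2.eq_iff] at he
      rcases he with ⟨rfl, rfl⟩ | ⟨rfl, rfl⟩
      · exact h.trans ih
      · exact h.symm.trans ih
    · refine (Reachable.trans ⟨Walk.cons ?_ Walk.nil⟩ ih)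
      rw [sdiff_adj]
      refine ⟨ha, ?_⟩
      rw [fromEdgeSet_adj]
      simp only [Set.mem_singleton_iff]
      tauto

/-- A connected graph with at most `#V - 1` edges is a tree. -/
private lemma SpanAux.isTree_of_connected_of_card [Fintype V] {G : SimpleGraph V}
    (hc : G.Connected) (hcard : G.edgeSet.ncard + 1 ≤ Fintype.card V) : G.IsTree := by
  classical
  generalize hm : G.edgeSet.ncard = m at *
  induction m using Nat.strong_induction_on generalizing G with
  | _ m ih =>
  by_cases ha : G.IsAcyclic
  · exact ⟨hc, ha⟩
  · exfalso
    rw [isAcyclic_iff_forall_adj_isBridge] at ha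
    push_neg at ha
    obtain ⟨v, w, hadj, hnb⟩ := ha
    rw [isBridge_iff] at hnb
    push_neg at hnb
    have hreach := hnb
    set G' := G \ fromEdgeSet {s(v, w)} with hG'
    have hc' : G'.Connected := by
      have := hc.nonempty
      exact Connected.mk (fun x y => SpanAux.reach_del hreach (hc.preconnected x y))
    have hE' : G'.edgeSet = G.edgeSet \ {s(v,w)} := by
      rw [hG', edgeSet_sdiff, edgeSet_fromEdgeSet, edgeSet_sdiff_sdiff_isDiag]
    have hmem : s(v,w) ∈ G.edgeSet := hadj
    have hfin : G.edgeSet.Finite := Set.toFinite _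
    have hcard' : G'.edgeSet.ncard = m - 1 := by
      rw [hE', Set.ncard_diff_singleton_of_mem hmem, hm]
    have hm1 : 1 ≤ m := by
      rw [← hm]
      have : G.edgeSet.Nonempty := ⟨_, hmem⟩
      have := Set.ncard_pos (s := G.edgeSet) hfin |>.2 this
      omega
    have htree : G'.IsTree := ih (m-1) (by omega) hc' hcard' (by omega)
    have := htree.card_edgeFinset
    rw [← Set.ncard_coe_finset, coe_edgeFinset] at this
    omega

private lemma SpanAux.no_triangle {T : SimpleGraph V} (hT : T.IsAcyclic) {u v x : V}
    (he : T.Adj u v) (h1 : T.Adj x u) (h2 : T.Adj x v) : False := by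
  have hb := (isAcyclic_iff_forall_adj_isBridge.mp hT) he
  rw [isBridge_iff] at hb
  refine hb ?_
  have a1 : (T \ fromEdgeSet {s(u, v)}).Adj u x := by
    rw [sdiff_adj, fromEdgeSet_adj]
    refine ⟨h1.symm, ?_⟩
    intro h
    rw [Set.mem_singleton_iff, Sym2.eq_iff] at h
    rcases h with ⟨-, rfl⟩ | ⟨rfl, -⟩
    · exact h2.ne rfl
    · exact he.ne rfl
  have a2 : (T \ fromEdgeSet {s(u, v)}).Adj x v := by
    rw [sdiff_adj, fromEdgeSet_adj]
    refine ⟨h2, ?_⟩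
    intro h
    rw [Set.mem_singleton_iff, Sym2.eq_iff] at h
    rcases h with ⟨rfl, -⟩ | ⟨-, rfl⟩
    · exact h1.ne rfl
    · exact he.ne rfl
  exact a1.reachable.trans a2.reachable

end Counting

private lemma SpanAux.tree_ncard {m : ℕ} {G : SimpleGraph (Fin m)} (h : G.IsTree) :
    G.edgeSet.ncard + 1 = m := by
  classical
  haveI : Fintype ↑G.edgeSet := Fintype.ofFinite _
  rw [Set.ncard_eq_toFinset_card']
  have := h.card_edgeFinset
  rwa [Fintype.card_fin] at this

namespace SpanAux

variable {n : ℕ} {u v : Fin (n+1)} {q : Fin (n+1) → Fin n}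

private lemma same_im (huv : u ≠ v)
    (hinj : ∀ x y : Fin (n + 1), q x = q y → x = y ∨ s(x, y) = s(u, v))
    {x y : Fin (n+1)} (h : q x = q y) :
    x = y ∨ ((x = u ∧ y = v) ∨ (x = v ∧ y = u)) := by
  rcases hinj x y h with h' | h'
  · exact Or.inl h'
  · rw [Sym2.eq_iff] at h'
    tauto

private lemma contract_reach (hquv : q u = q v)
    {T : SimpleGraph (Fin (n+1))} {x y : Fin (n+1)} (w : T.Walk x y) :
    (fromEdgeSet (Sym2.map q '' (T.edgeSet \ {s(u,v)}))).Reachable (q x) (q y) := by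
  induction w with
  | nil => exact Reachable.refl _
  | cons ha p ih =>
    rename_i x' z' y'
    by_cases hqe : q x' = q z'
    · rw [hqe]; exact ih
    · refine Reachable.trans (Adj.reachable ?_) ih
      rw [fromEdgeSet_adj]
      refine ⟨⟨s(x', z'), ⟨ha, ?_⟩, Sym2.map_pair_eq q x' z'⟩, hqe⟩
      simp only [Set.mem_singleton_iff, Sym2.eq_iff]
      rintro (⟨rfl, rfl⟩ | ⟨rfl, rfl⟩)
      · exact hqe hquv
      · exact hqe hquv.symm

private lemma lift_reach (huv : u ≠ v)
    (hinj : ∀ x y : Fin (n + 1), q x = q y → x = y ∨ s(x, y) = s(u, v))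
    {T : SimpleGraph (Fin (n+1))} (he0 : T.Adj u v) {T' : SimpleGraph (Fin n)}
    (hl : ∀ x' z' : Fin n, T'.Adj x' z' → ∃ f ∈ T.edgeSet, Sym2.map q f = s(x', z')) :
    ∀ {x' y' : Fin n} (_ : T'.Walk x' y') (x y : Fin (n+1)),
      q x = x' → q y = y' → T.Reachable x y := by
  have key : ∀ x y : Fin (n+1), q x = q y → T.Reachable x y := by
    intro x y h
    rcases same_im huv hinj h with rfl | (⟨rfl, rfl⟩ | ⟨rfl, rfl⟩)
    · exact Reachable.refl _
    · exact he0.reachable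
    · exact he0.symm.reachable
  intro x' y' w
  induction w with
  | nil => intro x y hx hy; exact key x y (by rw [hx, hy])
  | cons ha p ih =>
    rename_i a' b' c'
    intro x y hx hy
    obtain ⟨f, hf, hmap⟩ := hl a' b' ha
    induction f with
    | h p1 p2 =>
      rw [Sym2.map_pair_eq, Sym2.eq_iff] at hmap
      rcases hmap with ⟨h1, h2⟩ | ⟨h1, h2⟩
      · exact ((key x p1 (by rw [hx, h1])).trans
          (Adj.reachable ((SimpleGraph.mem_edgeSet _).mp hf))).trans (ih p2 y h2 hy)
      · exact ((key x p2 (by rw [hx, h2])).trans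
          (Adj.reachable ((SimpleGraph.mem_edgeSet _).mp hf).symm)).trans (ih p1 y h1 hy)

/-- The contraction map is injective on edges of a tree containing `s(u,v)`, minus that edge. -/
private lemma injOn_contract (huv : u ≠ v)
    (hinj : ∀ x y : Fin (n + 1), q x = q y → x = y ∨ s(x, y) = s(u, v))
    {T : SimpleGraph (Fin (n+1))} (hT : T.IsAcyclic) (he0 : T.Adj u v) :
    Set.InjOn (Sym2.map q) (T.edgeSet \ {s(u,v)}) := by
  have key : ∀ x y x' y' : Fin (n+1),
      s(x,y) ∈ T.edgeSet \ {s(u,v)} → s(x',y') ∈ T.edgeSet \ {s(u,v)} →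
      q x = q x' → q y = q y' → s(x,y) = s(x',y') := by
    intro x y x' y' hf1 hf2 hx hy
    obtain ⟨hf1e, hf1ne⟩ := hf1
    obtain ⟨hf2e, hf2ne⟩ := hf2
    rw [SimpleGraph.mem_edgeSet] at hf1e hf2e
    rcases same_im huv hinj hx with rfl | hxc
    · rcases same_im huv hinj hy with rfl | hyc
      · rfl
      · exfalso
        rcases hyc with ⟨rfl, rfl⟩ | ⟨rfl, rfl⟩
        · exact no_triangle hT he0 hf1e hf2e
        · exact no_triangle hT he0 hf2e hf1e
    · rcases same_im huv hinj hy with rfl | hyc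
      · exfalso
        rcases hxc with ⟨rfl, rfl⟩ | ⟨rfl, rfl⟩
        · exact no_triangle hT he0 hf1e.symm hf2e.symm
        · exact no_triangle hT he0 hf2e.symm hf1e.symm
      · exfalso
        apply hf1ne
        simp only [Set.mem_singleton_iff, Sym2.eq_iff]
        rcases hxc with ⟨rfl, rfl⟩ | ⟨rfl, rfl⟩ <;> rcases hyc with ⟨rfl, rfl⟩ | ⟨rfl, rfl⟩
        · exact absurd rfl hf1e.ne
        · tauto
        · tauto
        · exact absurd rfl hf1e.ne
  intro f1 hf1 f2 hf2 hm
  induction f1 with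
  | h x y =>
    induction f2 with
    | h x' y' =>
      rw [Sym2.map_pair_eq, Sym2.map_pair_eq, Sym2.eq_iff] at hm
      rcases hm with ⟨h1, h2⟩ | ⟨h1, h2⟩
      · exact key x y x' y' hf1 hf2 h1 h2
      · exact (key x y y' x' hf1
          (by rw [show s(y',x') = s(x',y') from Sym2.eq_swap]; exact hf2) h1 h2).trans
          Sym2.eq_swap

/-- edges of a tree other than `s(u,v)` map to non-diagonal elements -/
private lemma map_not_diag (huv : u ≠ v)
    (hinj : ∀ x y : Fin (n + 1), q x = q y → x = y ∨ s(x, y) = s(u, v))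
    {T : SimpleGraph (Fin (n+1))} {f : Sym2 (Fin (n+1))}
    (hf : f ∈ T.edgeSet \ {s(u,v)}) : ¬ (Sym2.map q f).IsDiag := by
  induction f with
  | h x y =>
    obtain ⟨hfe, hfne⟩ := hf
    rw [SimpleGraph.mem_edgeSet] at hfe
    rw [Sym2.map_pair_eq, Sym2.mk_isDiag_iff]
    intro h
    rcases same_im huv hinj h with rfl | hc
    · exact hfe.ne rfl
    · apply hfne
      rw [Set.mem_singleton_iff, Sym2.eq_iff]
      tauto

private lemma contract_isTree (hn : 1 ≤ n) (huv : u ≠ v) (hq : Function.Surjective q)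
    (hquv : q u = q v)
    (hinj : ∀ x y : Fin (n + 1), q x = q y → x = y ∨ s(x, y) = s(u, v))
    {T : SimpleGraph (Fin (n+1))} (hT : T.IsTree) (he0 : s(u,v) ∈ T.edgeSet) :
    (fromEdgeSet (Sym2.map q '' (T.edgeSet \ {s(u,v)}))).IsTree ∧
    (fromEdgeSet (Sym2.map q '' (T.edgeSet \ {s(u,v)}))).edgeSet
      = Sym2.map q '' (T.edgeSet \ {s(u,v)}) := by
  set S := Sym2.map q '' (T.edgeSet \ {s(u,v)}) with hS
  have hES : (fromEdgeSet S).edgeSet = S := by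
    rw [edgeSet_fromEdgeSet]
    ext g
    simp only [Set.mem_diff, Set.mem_setOf_eq, and_iff_left_iff_imp]
    rintro ⟨f, hf, rfl⟩
    exact map_not_diag huv hinj hf
  refine ⟨?_, hES⟩
  have hconn : (fromEdgeSet S).Connected := by
    haveI : Nonempty (Fin n) := ⟨⟨0, hn⟩⟩
    refine Connected.mk ?_
    intro x' y'
    obtain ⟨x, rfl⟩ := hq x'
    obtain ⟨y, rfl⟩ := hq y'
    obtain ⟨w⟩ := hT.isConnected.preconnected x y
    exact contract_reach hquv w
  refine isTree_of_connected_of_card hconn ?_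
  rw [hES, Fintype.card_fin]
  have h1 : S.ncard = (T.edgeSet \ {s(u,v)}).ncard :=
    Set.ncard_image_of_injOn (injOn_contract huv hinj hT.IsAcyclic
      ((SimpleGraph.mem_edgeSet _).mp he0))
  have h2 : (T.edgeSet \ {s(u,v)}).ncard = T.edgeSet.ncard - 1 :=
    Set.ncard_diff_singleton_of_mem he0
  have h3 := tree_ncard hT
  omega

private lemma lift_isTree (huv : u ≠ v)
    (hinj : ∀ x y : Fin (n + 1), q x = q y → x = y ∨ s(x, y) = s(u, v))
    {T' : SimpleGraph (Fin n)} (hT' : T'.IsTree) {S : Set (Sym2 (Fin (n+1)))}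
    (hS1 : ∀ f ∈ S, ¬f.IsDiag) (hS2 : ∀ f ∈ S, f ≠ s(u,v))
    (hS3 : Sym2.map q '' S = T'.edgeSet)
    (hS4 : Set.InjOn (Sym2.map q) S) :
    (fromEdgeSet (insert s(u,v) S)).IsTree ∧
    (fromEdgeSet (insert s(u,v) S)).edgeSet = insert s(u,v) S := by
  have hES : (fromEdgeSet (insert s(u,v) S)).edgeSet = insert s(u,v) S := by
    rw [edgeSet_fromEdgeSet]
    ext g
    simp only [Set.mem_diff, Set.mem_setOf_eq, and_iff_left_iff_imp]
    rintro (rfl | hg)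
    · rw [Sym2.mem_diagSet, Sym2.mk_isDiag_iff]; exact huv
    · exact hS1 g hg
  refine ⟨?_, hES⟩
  have hadj : (fromEdgeSet (insert s(u,v) S)).Adj u v := by
    rw [fromEdgeSet_adj]
    exact ⟨Set.mem_insert _ _, huv⟩
  have hconn : (fromEdgeSet (insert s(u,v) S)).Connected := by
    refine Connected.mk ?_
    intro x y
    obtain ⟨w⟩ := hT'.isConnected.preconnected (q x) (q y)
    refine lift_reach huv hinj hadj ?_ w x y rfl rfl
    intro x' z' hadj'
    have : s(x', z') ∈ T'.edgeSet := hadj'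
    rw [← hS3] at this
    obtain ⟨f, hf, hmap⟩ := this
    exact ⟨f, by rw [hES]; exact Set.mem_insert_of_mem _ hf, hmap⟩
  refine isTree_of_connected_of_card hconn ?_
  rw [hES, Fintype.card_fin]
  have h0 : s(u,v) ∉ S := fun h => hS2 _ h rfl
  have h1 : (insert s(u,v) S).ncard = S.ncard + 1 :=
    Set.ncard_insert_of_notMem h0 (Set.toFinite _)
  have h2 : S.ncard = T'.edgeSet.ncard := by
    rw [← hS3]; exact (Set.ncard_image_of_injOn hS4).symm
  have h3 := tree_ncard hT'
  omega

end SpanAux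

/-! ### Finset reformulations -/

/-- The edge set of a graph on `Fin m` as a `Finset`. -/
noncomputable def SpanAux.efin {m : ℕ} (G : SimpleGraph (Fin m)) : Finset (Sym2 (Fin m)) :=
  (Set.toFinite G.edgeSet).toFinset

lemma SpanAux.mem_efin {m : ℕ} {G : SimpleGraph (Fin m)} {f : Sym2 (Fin m)} :
    f ∈ SpanAux.efin G ↔ f ∈ G.edgeSet :=
  Set.Finite.mem_toFinset _

lemma SpanAux.treeProd_eq {m : ℕ} {A : Type*} [CommRing A] (G : SimpleGraph (Fin m))
    (a : Sym2 (Fin m) → A) : treeProd G a = ∏ f ∈ SpanAux.efin G, a f := by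
  simp only [treeProd,
    show G.edgeSet = (↑(SpanAux.efin G) : Set (Sym2 (Fin m))) from
      ((Set.toFinite G.edgeSet).coe_toFinset).symm,
    finprod_mem_coe_finset]

/-- The trees on `Fin m` as a `Finset`. -/
noncomputable def SpanAux.treesFin (m : ℕ) : Finset (SimpleGraph (Fin m)) :=
  (Set.toFinite {T : SimpleGraph (Fin m) | T.IsTree}).toFinset

lemma SpanAux.mem_treesFin {m : ℕ} {T : SimpleGraph (Fin m)} :
    T ∈ SpanAux.treesFin m ↔ T.IsTree :=
  Set.Finite.mem_toFinset _

lemma SpanAux.forestedForm_eq (m : ℕ) {A : Type*} [CommRing A] (a : Sym2 (Fin m) → A) :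
    forestedForm m a = ∑ T ∈ SpanAux.treesFin m, treeProd T a := by
  have h0 : forestedForm m a = ∑ᶠ T ∈ {T : SimpleGraph (Fin m) | T.IsTree}, treeProd T a := rfl
  rw [h0]
  simp only [show {T : SimpleGraph (Fin m) | T.IsTree}
      = (↑(SpanAux.treesFin m) : Set (SimpleGraph (Fin m))) from
      ((Set.toFinite _).coe_toFinset).symm,
    finsum_mem_coe_finset]

/-- The fiber of the contraction over an edge `g`, as a `Finset`. -/
noncomputable def SpanAux.fibFin {n : ℕ} (q : Fin (n + 1) → Fin n) (e₀ : Sym2 (Fin (n + 1)))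
    (g : Sym2 (Fin n)) : Finset (Sym2 (Fin (n + 1))) :=
  (Set.toFinite {f : Sym2 (Fin (n + 1)) | ¬ f.IsDiag ∧ f ≠ e₀ ∧ Sym2.map q f = g}).toFinset

lemma SpanAux.mem_fibFin {n : ℕ} {q : Fin (n + 1) → Fin n} {e₀ : Sym2 (Fin (n + 1))}
    {g : Sym2 (Fin n)} {f : Sym2 (Fin (n + 1))} :
    f ∈ SpanAux.fibFin q e₀ g ↔ ¬ f.IsDiag ∧ f ≠ e₀ ∧ Sym2.map q f = g :=
  Set.Finite.mem_toFinset _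

lemma SpanAux.pushforward_eq {n : ℕ} {A : Type*} [CommRing A]
    (q : Fin (n + 1) → Fin n) (e₀ : Sym2 (Fin (n + 1)))
    (a : Sym2 (Fin (n + 1)) → A) (g : Sym2 (Fin n)) :
    pushforward q e₀ a g = ∑ f ∈ SpanAux.fibFin q e₀ g, a f := by
  simp only [pushforward,
    show {f : Sym2 (Fin (n + 1)) | ¬ f.IsDiag ∧ f ≠ e₀ ∧ Sym2.map q f = g}
      = (↑(SpanAux.fibFin q e₀ g) : Set (Sym2 (Fin (n+1)))) from
      ((Set.toFinite _).coe_toFinset).symm,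
    finsum_mem_coe_finset]


namespace SpanAux

variable {n : ℕ} {u v : Fin (n+1)} {q : Fin (n+1) → Fin n}

/-- The range of a system of lifts of the edges of `T'`. -/
private def pRange (T' : SimpleGraph (Fin n))
    (p : (g : Sym2 (Fin n)) → g ∈ efin T' → Sym2 (Fin (n+1))) : Set (Sym2 (Fin (n+1))) :=
  Set.range fun x : {x // x ∈ efin T'} => p x.1 x.2

section pfacts

variable {T' : SimpleGraph (Fin n)}
  {p : (g : Sym2 (Fin n)) → g ∈ efin T' → Sym2 (Fin (n+1))}
  (hp : ∀ (g : Sym2 (Fin n)) (hg : g ∈ efin T'), p g hg ∈ fibFin q s(u,v) g)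

include hp in
private lemma pRange_not_diag : ∀ f ∈ pRange T' p, ¬ f.IsDiag := by
  rintro f ⟨x, rfl⟩
  exact (mem_fibFin.mp (hp x.1 x.2)).1

include hp in
private lemma pRange_ne : ∀ f ∈ pRange T' p, f ≠ s(u,v) := by
  rintro f ⟨x, rfl⟩
  exact (mem_fibFin.mp (hp x.1 x.2)).2.1

include hp in
private lemma pRange_map : ∀ (g : Sym2 (Fin n)) (hg : g ∈ efin T'),
    Sym2.map q (p g hg) = g := fun g hg => (mem_fibFin.mp (hp g hg)).2.2

include hp in
private lemma pRange_image : Sym2.map q '' pRange T' p = T'.edgeSet := by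
  ext g
  constructor
  · rintro ⟨f, ⟨x, rfl⟩, rfl⟩
    rw [pRange_map hp]
    exact mem_efin.mp x.2
  · intro hg
    have hg' : g ∈ efin T' := mem_efin.mpr hg
    exact ⟨p g hg', ⟨⟨g, hg'⟩, rfl⟩, pRange_map hp g hg'⟩

include hp in
private lemma pRange_injOn : Set.InjOn (Sym2.map q) (pRange T' p) := by
  rintro f1 ⟨x1, rfl⟩ f2 ⟨x2, rfl⟩ h
  rw [pRange_map hp, pRange_map hp] at h
  obtain ⟨g1, hg1⟩ := x1
  obtain ⟨g2, hg2⟩ := x2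
  simp only at h ⊢
  subst h
  rfl

private lemma pmem_range {g : Sym2 (Fin n)} (hg : g ∈ efin T') : p g hg ∈ pRange T' p :=
  ⟨⟨g, hg⟩, rfl⟩

include hp in
private lemma pRange_eq_iff {f : Sym2 (Fin (n+1))} (hf : f ∈ pRange T' p)
    {g : Sym2 (Fin n)} (hg : g ∈ efin T') (hmap : Sym2.map q f = g) : f = p g hg := by
  obtain ⟨⟨g1, hg1⟩, rfl⟩ := hf
  have : g1 = g := by rw [← hmap, pRange_map hp]
  subst this
  rfl

include hp in
private lemma lift_spec (huv : u ≠ v)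
    (hinj : ∀ x y : Fin (n + 1), q x = q y → x = y ∨ s(x, y) = s(u, v))
    (hT' : T'.IsTree) :
    (fromEdgeSet (insert s(u,v) (pRange T' p))).IsTree ∧
    (fromEdgeSet (insert s(u,v) (pRange T' p))).edgeSet = insert s(u,v) (pRange T' p) :=
  lift_isTree huv hinj hT' (pRange_not_diag hp) (pRange_ne hp) (pRange_image hp)
    (pRange_injOn hp)

end pfacts

end SpanAux

/-- key property of the forested forms:
`Φ_{n+1}(a + 1_{e₀}) − Φ_{n+1}(a) = Φ_n((c_{e₀})_* a)`. -/
theorem forestedForm_add_indicator_sub {A : Type*} [CommRing A] (n : ℕ) (hn : 1 ≤ n)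
    (u v : Fin (n + 1)) (huv : u ≠ v)
    (q : Fin (n + 1) → Fin n) (hq : Function.Surjective q) (hquv : q u = q v)
    (hinj : ∀ x y : Fin (n + 1), q x = q y → x = y ∨ s(x, y) = s(u, v))
    (a : Sym2 (Fin (n + 1)) → A) :
    forestedForm (n + 1) (a + edgeIndicator s(u, v)) - forestedForm (n + 1) a =
      forestedForm n (pushforward q s(u, v) a) := by
  classical
  set e0 : Sym2 (Fin (n+1)) := s(u,v) with he0def
  -- Step 1: rewrite the left-hand side as a sum over trees containing `e0`
  rw [SpanAux.forestedForm_eq, SpanAux.forestedForm_eq, SpanAux.forestedForm_eq,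
    ← Finset.sum_sub_distrib]
  have hLHS : ∀ T ∈ SpanAux.treesFin (n+1),
      treeProd T (a + edgeIndicator e0) - treeProd T a
        = if e0 ∈ T.edgeSet then ∏ f ∈ (SpanAux.efin T).erase e0, a f else 0 := by
    intro T _
    rw [SpanAux.treeProd_eq, SpanAux.treeProd_eq]
    by_cases he : e0 ∈ T.edgeSet
    · rw [if_pos he]
      have hmem : e0 ∈ SpanAux.efin T := SpanAux.mem_efin.mpr he
      have key : ∀ b : Sym2 (Fin (n+1)) → A, ∏ f ∈ SpanAux.efin T, b f
          = b e0 * ∏ f ∈ (SpanAux.efin T).erase e0, b f :=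
        fun b => (Finset.mul_prod_erase _ _ hmem).symm
      rw [key (a + edgeIndicator e0), key a]
      have hval : ∀ f ∈ (SpanAux.efin T).erase e0,
          ((a + edgeIndicator e0) : Sym2 (Fin (n+1)) → A) f = a f := by
        intro f hf
        have hne : f ≠ e0 := Finset.ne_of_mem_erase hf
        show a f + edgeIndicator e0 f = a f
        simp [edgeIndicator, hne]
      rw [Finset.prod_congr rfl hval]
      have hv2 : ((a + edgeIndicator e0) : Sym2 (Fin (n+1)) → A) e0 = a e0 + 1 := by
        show a e0 + edgeIndicator e0 e0 = a e0 + 1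
        simp [edgeIndicator]
      rw [hv2]; ring
    · rw [if_neg he, sub_eq_zero]
      refine Finset.prod_congr rfl fun f hf => ?_
      have hne : f ≠ e0 := fun h => he (h ▸ SpanAux.mem_efin.mp hf)
      show a f + edgeIndicator e0 f = a f
      simp [edgeIndicator, hne]
  rw [Finset.sum_congr rfl hLHS, Finset.sum_ite, Finset.sum_const_zero, add_zero]
  -- Step 2: rewrite the right-hand side as a sum over pairs (tree, system of lifts)
  have hRHS : ∀ T' ∈ SpanAux.treesFin n,
      treeProd T' (pushforward q e0 a)
        = ∑ p ∈ (SpanAux.efin T').pi (fun g => SpanAux.fibFin q e0 g),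
            ∏ x ∈ (SpanAux.efin T').attach, a (p x.1 x.2) := by
    intro T' _
    rw [SpanAux.treeProd_eq,
      Finset.prod_congr rfl (fun g _ => SpanAux.pushforward_eq q e0 a g)]
    exact Finset.prod_sum _ _ _
  rw [Finset.sum_congr rfl hRHS, Finset.sum_sigma']
  -- Step 3: the bijection
  refine (Finset.sum_bij
    (i := fun z _ => fromEdgeSet (insert e0 (SpanAux.pRange z.1 z.2))) ?_ ?_ ?_ ?_).symm
  · -- maps into trees containing e0
    rintro ⟨T', p⟩ hz
    rw [Finset.mem_sigma] at hz
    obtain ⟨hzT, hzp⟩ := hz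
    have hp : ∀ (g : Sym2 (Fin n)) (hg : g ∈ SpanAux.efin T'),
        p g hg ∈ SpanAux.fibFin q s(u,v) g := Finset.mem_pi.mp hzp
    obtain ⟨htree, hedge⟩ := SpanAux.lift_spec hp huv hinj (SpanAux.mem_treesFin.mp hzT)
    rw [Finset.mem_filter]
    refine ⟨SpanAux.mem_treesFin.mpr htree, ?_⟩
    rw [hedge]
    exact Set.mem_insert _ _
  · -- injectivity
    rintro ⟨T1, p1⟩ hz1 ⟨T2, p2⟩ hz2 heq
    rw [Finset.mem_sigma] at hz1 hz2
    have hp1 : ∀ (g : Sym2 (Fin n)) (hg : g ∈ SpanAux.efin T1),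
        p1 g hg ∈ SpanAux.fibFin q s(u,v) g := Finset.mem_pi.mp hz1.2
    have hp2 : ∀ (g : Sym2 (Fin n)) (hg : g ∈ SpanAux.efin T2),
        p2 g hg ∈ SpanAux.fibFin q s(u,v) g := Finset.mem_pi.mp hz2.2
    obtain ⟨-, hedge1⟩ := SpanAux.lift_spec hp1 huv hinj (SpanAux.mem_treesFin.mp hz1.1)
    obtain ⟨-, hedge2⟩ := SpanAux.lift_spec hp2 huv hinj (SpanAux.mem_treesFin.mp hz2.1)
    have heq' : fromEdgeSet (insert e0 (SpanAux.pRange T1 p1))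
        = fromEdgeSet (insert e0 (SpanAux.pRange T2 p2)) := heq
    have hsets : insert e0 (SpanAux.pRange T1 p1) = insert e0 (SpanAux.pRange T2 p2) := by
      rw [← hedge1, ← hedge2, heq']
    have hR : SpanAux.pRange T1 p1 = SpanAux.pRange T2 p2 := by
      have h1 : e0 ∉ SpanAux.pRange T1 p1 := fun h => SpanAux.pRange_ne hp1 _ h rfl
      have h2 : e0 ∉ SpanAux.pRange T2 p2 := fun h => SpanAux.pRange_ne hp2 _ h rfl
      rw [← Set.insert_diff_self_of_notMem h1, ← Set.insert_diff_self_of_notMem h2, hsets]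
    have hT : T1 = T2 := by
      rw [← SimpleGraph.edgeSet_inj, ← SpanAux.pRange_image hp1, ← SpanAux.pRange_image hp2, hR]
    subst hT
    have hpp : p1 = p2 := by
      funext g hg
      have hmem : p1 g hg ∈ SpanAux.pRange T1 p2 := hR ▸ SpanAux.pmem_range (p := p1) hg
      have := SpanAux.pRange_eq_iff hp2 hmem hg (SpanAux.pRange_map hp1 g hg)
      exact this
    rw [hpp]
  · -- surjectivity
    intro T hT
    rw [Finset.mem_filter] at hT
    obtain ⟨hTtree, hTe0⟩ := hT
    have hTtree' := SpanAux.mem_treesFin.mp hTtree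
    obtain ⟨hctree, hcedge⟩ := SpanAux.contract_isTree hn huv hq hquv hinj hTtree' hTe0
    set T' := SimpleGraph.fromEdgeSet (Sym2.map q '' (T.edgeSet \ {e0})) with hT'def
    have hmemim : ∀ g, g ∈ SpanAux.efin T' → g ∈ Sym2.map q '' (T.edgeSet \ {e0}) := by
      intro g hg
      rw [← hcedge]
      exact SpanAux.mem_efin.mp hg
    set p : (g : Sym2 (Fin n)) → g ∈ SpanAux.efin T' → Sym2 (Fin (n+1)) :=
      fun g hg => (hmemim g hg).choose with hpdef
    have hpspec : ∀ (g : Sym2 (Fin n)) (hg : g ∈ SpanAux.efin T'),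
        p g hg ∈ T.edgeSet \ {e0} ∧ Sym2.map q (p g hg) = g :=
      fun g hg => (hmemim g hg).choose_spec
    have hp : ∀ (g : Sym2 (Fin n)) (hg : g ∈ SpanAux.efin T'),
        p g hg ∈ SpanAux.fibFin q s(u,v) g := by
      intro g hg
      obtain ⟨⟨hmem, hne⟩, hmap⟩ := hpspec g hg
      rw [SpanAux.mem_fibFin]
      exact ⟨SimpleGraph.not_isDiag_of_mem_edgeSet T hmem, hne, hmap⟩
    have hmem1 : (⟨T', p⟩ : (i : SimpleGraph (Fin n)) ×
          ((g : Sym2 (Fin n)) → g ∈ SpanAux.efin i → Sym2 (Fin (n + 1))))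
        ∈ (SpanAux.treesFin n).sigma
          (fun T'' => (SpanAux.efin T'').pi (fun g => SpanAux.fibFin q e0 g)) := by
      rw [Finset.mem_sigma]
      exact ⟨SpanAux.mem_treesFin.mpr hctree, Finset.mem_pi.mpr hp⟩
    refine ⟨⟨T', p⟩, hmem1, ?_⟩
    rw [← SimpleGraph.edgeSet_inj]
    obtain ⟨-, hedge⟩ := SpanAux.lift_spec hp huv hinj hctree
    rw [hedge]
    have hRE : SpanAux.pRange T' p = T.edgeSet \ {e0} := by
      ext f
      constructor
      · rintro ⟨x, rfl⟩
        exact (hpspec x.1 x.2).1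
      · intro hf
        have hgmem : Sym2.map q f ∈ SpanAux.efin T' := by
          rw [SpanAux.mem_efin, hcedge]
          exact ⟨f, hf, rfl⟩
        have h1 : p (Sym2.map q f) hgmem ∈ T.edgeSet \ {e0} := (hpspec _ hgmem).1
        have h2 : Sym2.map q (p (Sym2.map q f) hgmem) = Sym2.map q f := (hpspec _ hgmem).2
        have := SpanAux.injOn_contract huv hinj hTtree'.IsAcyclic
          ((SimpleGraph.mem_edgeSet _).mp hTe0) h1 hf h2
        rw [← this]
        exact SpanAux.pmem_range hgmem
    rw [hRE, Set.insert_diff_singleton, Set.insert_eq_of_mem hTe0]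
  · -- values agree
    rintro ⟨T', p⟩ hz
    rw [Finset.mem_sigma] at hz
    have hp : ∀ (g : Sym2 (Fin n)) (hg : g ∈ SpanAux.efin T'),
        p g hg ∈ SpanAux.fibFin q s(u,v) g := Finset.mem_pi.mp hz.2
    obtain ⟨-, hedge⟩ := SpanAux.lift_spec hp huv hinj (SpanAux.mem_treesFin.mp hz.1)
    have herase :
        (SpanAux.efin (SimpleGraph.fromEdgeSet (insert e0 (SpanAux.pRange T' p)))).erase e0
          = Finset.image (fun x : {x // x ∈ SpanAux.efin T'} => p x.1 x.2)
              (SpanAux.efin T').attach := by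
      ext f
      rw [Finset.mem_erase, SpanAux.mem_efin, hedge, Finset.mem_image]
      constructor
      · rintro ⟨hne, (rfl | ⟨x, rfl⟩)⟩
        · exact absurd rfl hne
        · exact ⟨x, Finset.mem_attach _ _, rfl⟩
      · rintro ⟨x, -, rfl⟩
        exact ⟨SpanAux.pRange_ne hp _ (SpanAux.pmem_range x.2),
          Set.mem_insert_of_mem _ (SpanAux.pmem_range x.2)⟩
    have hinjx : ∀ x1 ∈ (SpanAux.efin T').attach, ∀ x2 ∈ (SpanAux.efin T').attach,
        p x1.1 x1.2 = p x2.1 x2.2 → x1 = x2 := by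
      intro x1 _ x2 _ h
      have h' : Sym2.map q (p x1.1 x1.2) = Sym2.map q (p x2.1 x2.2) := by rw [h]
      rw [SpanAux.pRange_map hp, SpanAux.pRange_map hp] at h'
      exact Subtype.ext h'
    rw [herase, Finset.prod_image hinjx]
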